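/- Let T be a totally ordered set, k a field, and M a subrepresentation of a finite direct sum of representable representations ⊕_{i=1}^n k_{[a_i,∞)} that is generated by finitely many elements. Then M is isomorphic to a finite direct sum of representations of the form k_{[c,∞)}; in particular M is projective. -/

import Mathlib

open scoped Classical DirectSum

universe u v

/-- A persistence module (representation) of a preordered set `T`
over a field `k`: a functor from `T` to `k`-vector spaces. -/
structure PersMod (T : Type u) [Preorder T] (k : Type v) [Field k] where
  V : T → Type v
  [addCommGroup : ∀ t, AddCommGroup (V t)]
  [module : ∀ t, Module k (V t)]
  map : ∀ {s t : T}, s ≤ t → (V s →ₗ[k] V t)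
  map_id : ∀ t : T, map (le_refl t) = LinearMap.id
  map_comp : ∀ {s t u : T} (h₁ : s ≤ t) (h₂ : t ≤ u),
    map (h₁.trans h₂) = (map h₂).comp (map h₁)

attribute [instance] PersMod.addCommGroup PersMod.module

/-- A subset of a preordered set is convex (an interval, in a total order). -/
def IsConvex {T : Type u} [Preorder T] (J : Set T) : Prop :=
  ∀ ⦃a b c : T⦄, a ≤ b → b ≤ c → a ∈ J → c ∈ J → b ∈ J

/-- The interval representation `k_J`: `k` at points of `J`, `0` elsewhere,
identity structure maps within `J`. -/
noncomputable def intervalRep (T : Type u) [Preorder T] (k : Type v) [Field k]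
    (J : Set T) (hJ : IsConvex J) : PersMod T k where
  V t := ↥(if t ∈ J then (⊤ : Submodule k k) else ⊥)
  map {s t} h :=
    { toFun := fun x => ⟨if t ∈ J then (x : k) else 0, by
        by_cases ht : t ∈ J
        · rw [if_pos ht, if_pos ht]; exact Submodule.mem_top
        · rw [if_neg ht, if_neg ht]; exact Submodule.zero_mem _⟩
      map_add' := fun x y => by
        by_cases ht : t ∈ J <;> ext <;> simp [ht]
      map_smul' := fun c x => by
        by_cases ht : t ∈ J <;> ext <;> simp [ht] }
  map_id t := by
    ext x
    by_cases ht : t ∈ J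
    · simp [ht]
    · have hx : (x : k) = 0 := by
        have h2 := x.2; simp only [if_neg ht] at h2; exact (Submodule.mem_bot k).mp h2
      first
        | (show (if t ∈ J then (x : k) else 0) = (x : k); rw [if_neg ht, hx])
        | (apply Subtype.ext; show (if t ∈ J then (x : k) else 0) = (x : k); rw [if_neg ht, hx])
  map_comp {s t u} h₁ h₂ := by
    ext x
    by_cases hu : u ∈ J
    · by_cases ht : t ∈ J
      · first
          | (show (if u ∈ J then (x : k) else 0) = (if u ∈ J then (if t ∈ J then (x : k) else 0) else 0)
             simp only [hu, ht, ↓reduceIte])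
          | (apply Subtype.ext
             show (if u ∈ J then (x : k) else 0) = (if u ∈ J then (if t ∈ J then (x : k) else 0) else 0)
             simp only [hu, ht, ↓reduceIte])
      · by_cases hs : s ∈ J
        · exact absurd (hJ h₁ h₂ hs hu) ht
        · have hx : (x : k) = 0 := by
            have h2 := x.2; simp only [if_neg hs] at h2; exact (Submodule.mem_bot k).mp h2
          simp [hu, ht, hx]
    · simp [hu]

/-- The space of morphisms of representations `M → N`, as a submodule of
the module of all families of linear maps. -/
def homSubmodule {T : Type u} [Preorder T] (k : Type v) [Field k]
    (M N : PersMod T k) : Submodule k (∀ t, M.V t →ₗ[k] N.V t) where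
  carrier := {f | ∀ (s t : T) (h : s ≤ t) (x : M.V s),
    N.map h (f s x) = f t (M.map h x)}
  add_mem' := by
    intro a b ha hb s t h x
    simp [ha s t h x, hb s t h x]
  zero_mem' := by intro s t h x; simp
  smul_mem' := by
    intro c a ha s t h x
    simp [ha s t h x]

/-- An isomorphism of persistence modules. -/
structure PersIso {T : Type u} [Preorder T] {k : Type v} [Field k]
    (M N : PersMod T k) where
  e : ∀ t, M.V t ≃ₗ[k] N.V t
  natural : ∀ {s t : T} (h : s ≤ t) (x : M.V s),
    e t (M.map h x) = N.map h (e s x)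

/-- The pointwise product of a family of persistence modules. -/
def prodRep {T : Type u} [Preorder T] (k : Type v) [Field k]
    (ι : Type v) (F : ι → PersMod T k) : PersMod T k where
  V t := ∀ i, (F i).V t
  map {s t} h := LinearMap.pi fun i => ((F i).map h).comp (LinearMap.proj i)
  map_id t := by
    ext x i
    simp [(F i).map_id]
  map_comp h₁ h₂ := by
    ext x i
    simp [(F i).map_comp h₁ h₂]

/-- The direct sum of a family of persistence modules. -/
noncomputable def dSum {T : Type u} [Preorder T] (k : Type v) [Field k]
    (ι : Type v) (F : ι → PersMod T k) : PersMod T k where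
  V t := ⨁ i, (F i).V t
  map {s t} h :=
    letI := Classical.decEq ι
    DirectSum.toModule k ι _ fun i =>
      (DirectSum.lof k ι (fun j => (F j).V t) i).comp ((F i).map h)
  map_id t := by
    letI := Classical.decEq ι
    refine DirectSum.linearMap_ext _ fun i => ?_
    ext x
    simp [DirectSum.toModule_lof, (F i).map_id]
  map_comp {s t u} h₁ h₂ := by
    letI := Classical.decEq ι
    refine DirectSum.linearMap_ext _ fun i => ?_
    ext x
    simp [DirectSum.toModule_lof, (F i).map_comp h₁ h₂]

theorem isConvex_Ici {T : Type u} [LinearOrder T] (a : T) : IsConvex (Set.Ici a) :=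
  fun _ _ _ h1 _ ha _ => le_trans ha h1

-- combinatorial selection lemma
lemma aux_sum_zero {k : Type} [Field k] {W : Type} [AddCommGroup W] [Module k W] {m : ℕ}
    (v : Fin m → W) (S : Finset (Fin m))
    (h : ∀ j ∈ S, v j ∉ Submodule.span k (v '' {j' | j' < j})) :
    ∀ (N : ℕ) (s : Finset (Fin m)), s.card ≤ N → ↑s ⊆ (S : Set (Fin m)) →
      ∀ g : Fin m → k, ∑ i ∈ s, g i • v i = 0 → ∀ i ∈ s, g i = 0 := by
  intro N
  induction N with
  | zero =>
    intro s hs _ g _ i hi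
    rw [Nat.le_zero, Finset.card_eq_zero] at hs
    subst hs; simp at hi
  | succ N ih =>
    intro s hcard hsub g hsum i hi
    rcases s.eq_empty_or_nonempty with rfl | hne
    · simp at hi
    · set j := s.max' hne with hjdef
      have hj : j ∈ s := s.max'_mem hne
      have hjS : j ∈ S := hsub hj
      have key : g j = 0 := by
        by_contra hgj
        apply h j hjS
        have hsplit : g j • v j + ∑ i ∈ s.erase j, g i • v i = 0 := by
          rw [← Finset.add_sum_erase s (fun i => g i • v i) hj] at hsum; exact hsum
        have hvj : v j = (-(g j)⁻¹) • ∑ i ∈ s.erase j, g i • v i := by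
          have h1 : g j • v j = -∑ i ∈ s.erase j, g i • v i :=
            eq_neg_of_add_eq_zero_left hsplit
          rw [neg_smul, ← smul_neg, ← h1, smul_smul, inv_mul_cancel₀ hgj, one_smul]
        rw [hvj]
        refine Submodule.smul_mem _ _ (Submodule.sum_mem _ fun i' hi' => ?_)
        refine Submodule.smul_mem _ _ (Submodule.subset_span ?_)
        refine ⟨i', ?_, rfl⟩
        exact lt_of_le_of_ne (s.le_max' i' (Finset.mem_of_mem_erase hi'))
          (Finset.ne_of_mem_erase hi')
      have hsum' : ∑ i ∈ s.erase j, g i • v i = 0 := by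
        have hsplit : g j • v j + ∑ i ∈ s.erase j, g i • v i = 0 := by
          rw [← Finset.add_sum_erase s (fun i => g i • v i) hj] at hsum; exact hsum
        rw [key, zero_smul, zero_add] at hsplit; exact hsplit
      by_cases hij : i = j
      · rw [hij]; exact key
      · refine ih (s.erase j) ?_ (fun x hx => hsub (Finset.mem_of_mem_erase hx)) g hsum' i
          (Finset.mem_erase.2 ⟨hij, hi⟩)
        rw [Finset.card_erase_of_mem hj]
        omega

lemma exists_good_subset {k : Type} [Field k] {W : Type} [AddCommGroup W] [Module k W]
    {m : ℕ} (v : Fin m → W) :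
    ∃ S : Finset (Fin m),
      (LinearIndependent k (fun j : {x // x ∈ S} => v (j : Fin m))) ∧
      ∀ J : Set (Fin m), (∀ ⦃j' j : Fin m⦄, j' ≤ j → j ∈ J → j' ∈ J) →
        Submodule.span k (v '' J) = Submodule.span k (v '' (J ∩ ↑S)) := by
  classical
  set S : Finset (Fin m) :=
    Finset.univ.filter (fun j => v j ∉ Submodule.span k (v '' {j' | j' < j})) with hS
  have hmemS : ∀ j, j ∈ S ↔ v j ∉ Submodule.span k (v '' {j' | j' < j}) := by
    intro j; simp [hS]
  have B1 : ∀ j : Fin m, v j ∈ Submodule.span k (v '' ({j' | j' ≤ j} ∩ ↑S)) := by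
    intro j
    induction j using (wellFounded_lt (α := Fin m)).induction with
    | _ j ih =>
      by_cases hj : j ∈ S
      · exact Submodule.subset_span ⟨j, ⟨le_refl j, hj⟩, rfl⟩
      · have hmem : v j ∈ Submodule.span k (v '' {j' | j' < j}) := by
          by_contra hc; exact hj ((hmemS j).2 hc)
        refine Submodule.span_le.2 ?_ hmem
        rintro _ ⟨j', hj', rfl⟩
        have := ih j' hj'
        refine Submodule.span_mono (Set.image_mono ?_) this
        rintro x ⟨hx1, hx2⟩
        exact ⟨Set.mem_setOf.2 (le_trans (Set.mem_setOf.1 hx1) (le_of_lt hj')), hx2⟩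
  refine ⟨S, ?_, ?_⟩
  · rw [Fintype.linearIndependent_iff]
    intro g hg i
    set g' : Fin m → k := fun j => if h : j ∈ S then g ⟨j, h⟩ else 0 with hg'
    have hsum : ∑ j ∈ S, g' j • v j = 0 := by
      rw [← Finset.sum_attach S (fun j => g' j • v j)]
      rw [← hg, Finset.attach_eq_univ]
      refine Finset.sum_congr rfl fun x _ => ?_
      simp [hg', x.2]
    have h0 := aux_sum_zero v S (fun j hj => (hmemS j).1 hj) S.card S le_rfl
      (by exact fun x hx => hx) g' hsum i.1 i.2
    simpa [hg', i.2] using h0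
  · intro J hJ
    refine le_antisymm ?_ (Submodule.span_mono (Set.image_mono Set.inter_subset_left))
    refine Submodule.span_le.2 ?_
    rintro _ ⟨j, hjJ, rfl⟩
    refine Submodule.span_mono (Set.image_mono ?_) (B1 j)
    rintro x ⟨hx1, hx2⟩
    exact ⟨hJ hx1 hjJ, hx2⟩

section Machinery

variable {T : Type u} [LinearOrder T] {k : Type} [Field k]

/-- Direct sum of representables at points `c`. -/
noncomputable def rSum {m : ℕ} (c : Fin m → T) (k : Type) [Field k] : PersMod T k :=
  dSum k (Fin m) (fun i => intervalRep T k (Set.Ici (c i)) (isConvex_Ici _))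

lemma interval_val_eq_zero {J : Set T} {hJ : IsConvex J} {t : T} (ht : t ∉ J)
    (x : (intervalRep T k J hJ).V t) : x.1 = 0 := by
  have h2 := x.2
  simp only [if_neg ht] at h2
  exact (Submodule.mem_bot k).mp h2

lemma interval_eq_smul_one {J : Set T} {hJ : IsConvex J} {t : T} (ht : t ∈ J)
    (x : (intervalRep T k J hJ).V t) :
    x = x.1 • (⟨1, by rw [if_pos ht]; exact Submodule.mem_top⟩ : (intervalRep T k J hJ).V t) := by
  apply Subtype.ext
  show x.1 = x.1 • (1 : k)
  rw [smul_eq_mul, mul_one]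

lemma interval_map_val {J : Set T} {hJ : IsConvex J} {s t : T} (h : s ≤ t)
    (x : (intervalRep T k J hJ).V s) :
    ((intervalRep T k J hJ).map h x).1 = if t ∈ J then x.1 else 0 := rfl

/-- The coordinate embedding of the direct sum of representables into `Fin n → k`. -/
noncomputable def coordMap {n : ℕ} (c : Fin n → T) (t : T) :
    (rSum c k).V t →ₗ[k] (Fin n → k) :=
  LinearMap.pi fun i => (Submodule.subtype _).comp
    (DirectSum.component k (Fin n)
      (fun j => (intervalRep T k (Set.Ici (c j)) (isConvex_Ici _)).V t) i)

@[simp] lemma coordMap_apply {n : ℕ} (c : Fin n → T) (t : T)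
    (x : (rSum c k).V t) (i : Fin n) :
    coordMap c t x i
      = (DirectSum.component k (Fin n)
          (fun j => (intervalRep T k (Set.Ici (c j)) (isConvex_Ici _)).V t) i x).1 := rfl

lemma coordMap_injective {n : ℕ} (c : Fin n → T) (t : T) :
    Function.Injective (coordMap (k := k) c t) := by
  intro x y hxy
  refine DirectSum.ext fun i => ?_
  exact Subtype.ext (congrFun hxy i)

lemma coordMap_natural {n : ℕ} (c : Fin n → T) {s t : T} (h : s ≤ t) :
    (coordMap (k := k) c t).comp ((rSum c k).map h) = coordMap c s := by
  letI := Classical.decEq (Fin n)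
  refine DirectSum.linearMap_ext _ fun i => ?_
  refine LinearMap.ext fun y => ?_
  have h1 : ((rSum c k).map h) (DirectSum.lof k (Fin n)
        (fun j => (intervalRep T k (Set.Ici (c j)) (isConvex_Ici _)).V s) i y)
      = DirectSum.lof k (Fin n)
          (fun j => (intervalRep T k (Set.Ici (c j)) (isConvex_Ici _)).V t) i
          ((intervalRep T k (Set.Ici (c i)) (isConvex_Ici _)).map h y) :=
    DirectSum.toModule_lof k (φ := fun i => (DirectSum.lof k (Fin n)
        (fun j => (intervalRep T k (Set.Ici (c j)) (isConvex_Ici _)).V t) i).comp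
        ((intervalRep T k (Set.Ici (c i)) (isConvex_Ici _)).map h)) i y
  funext i'
  refine Eq.trans (congrArg (fun z => coordMap (k := k) c t z i') h1) ?_
  show (DirectSum.component k (Fin n)
          (fun j => (intervalRep T k (Set.Ici (c j)) (isConvex_Ici _)).V t) i'
          (DirectSum.lof k (Fin n)
            (fun j => (intervalRep T k (Set.Ici (c j)) (isConvex_Ici _)).V t) i
            ((intervalRep T k (Set.Ici (c i)) (isConvex_Ici _)).map h y))).1
      = (DirectSum.component k (Fin n)
          (fun j => (intervalRep T k (Set.Ici (c j)) (isConvex_Ici _)).V s) i'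
          (DirectSum.lof k (Fin n)
            (fun j => (intervalRep T k (Set.Ici (c j)) (isConvex_Ici _)).V s) i y)).1
  rw [DirectSum.component.of, DirectSum.component.of]
  by_cases hii : i = i'
  · subst hii
    rw [dif_pos rfl, dif_pos rfl]
    show ((intervalRep T k (Set.Ici (c i)) (isConvex_Ici _)).map h y).1 = y.1
    rw [interval_map_val h y]
    by_cases hci : t ∈ Set.Ici (c i)
    · rw [if_pos hci]
    · rw [if_neg hci]
      have hcs : s ∉ Set.Ici (c i) := fun hs => hci (le_trans hs h)
      rw [interval_val_eq_zero hcs y]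
  · rw [dif_neg hii, dif_neg hii]
    rfl

end Machinery

section Psi

variable {T : Type u} [LinearOrder T] {k : Type} [Field k]

/-- The evaluation map `⊕ k_{[b_j,∞)} → M` sending the generator of the `j`-th
summand to `u j`. -/
noncomputable def psiComp (M : PersMod T k) {m : ℕ} (b : Fin m → T)
    (u : ∀ j, M.V (b j)) (t : T) (j : Fin m) :
    (intervalRep T k (Set.Ici (b j)) (isConvex_Ici _)).V t →ₗ[k] M.V t :=
  if h : b j ≤ t then
    (M.map h).comp ((LinearMap.toSpanSingleton k (M.V (b j)) (u j)).comp
      (Submodule.subtype _))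
  else 0

noncomputable def psiMap (M : PersMod T k) {m : ℕ} (b : Fin m → T)
    (u : ∀ j, M.V (b j)) (t : T) : (rSum b k).V t →ₗ[k] M.V t :=
  DirectSum.toModule k (Fin m) (M.V t) (psiComp M b u t)

set_option maxHeartbeats 1000000 in
lemma psiMap_lof (M : PersMod T k) {m : ℕ} (b : Fin m → T)
    (u : ∀ j, M.V (b j)) (t : T) [DecidableEq (Fin m)] (j : Fin m)
    (x : (intervalRep T k (Set.Ici (b j)) (isConvex_Ici _)).V t) :
    psiMap M b u t (DirectSum.lof k (Fin m)
        (fun j' => (intervalRep T k (Set.Ici (b j')) (isConvex_Ici _)).V t) j x)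
      = (if hh : b j ≤ t then x.1 • M.map hh (u j) else 0) := by
  show DirectSum.toModule k (Fin m) (M.V t) (psiComp M b u t)
      (DirectSum.lof k (Fin m)
        (fun j' => (intervalRep T k (Set.Ici (b j')) (isConvex_Ici _)).V t) j x)
    = _
  rw [DirectSum.toModule_lof]
  simp only [psiComp]
  by_cases hh : b j ≤ t
  · rw [dif_pos hh, dif_pos hh]
    show M.map hh (x.1 • u j) = x.1 • M.map hh (u j)
    rw [map_smul]
  · rw [dif_neg hh, dif_neg hh]
    rfl

lemma psiMap_natural (M : PersMod T k) {m : ℕ} (b : Fin m → T)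
    (u : ∀ j, M.V (b j)) {s t : T} (h : s ≤ t) :
    (M.map h).comp (psiMap M b u s) = (psiMap M b u t).comp ((rSum b k).map h) := by
  letI := Classical.decEq (Fin m)
  refine DirectSum.linearMap_ext _ fun j => ?_
  refine LinearMap.ext fun x => ?_
  have h1 : ((rSum b k).map h) (DirectSum.lof k (Fin m)
        (fun j' => (intervalRep T k (Set.Ici (b j')) (isConvex_Ici _)).V s) j x)
      = DirectSum.lof k (Fin m)
          (fun j' => (intervalRep T k (Set.Ici (b j')) (isConvex_Ici _)).V t) j
          ((intervalRep T k (Set.Ici (b j)) (isConvex_Ici _)).map h x) :=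
    DirectSum.toModule_lof k (φ := fun i => (DirectSum.lof k (Fin m)
        (fun j' => (intervalRep T k (Set.Ici (b j')) (isConvex_Ici _)).V t) i).comp
        ((intervalRep T k (Set.Ici (b i)) (isConvex_Ici _)).map h)) j x
  simp only [LinearMap.comp_apply]
  refine Eq.trans (congrArg (M.map h) (psiMap_lof M b u s j x))
    (Eq.trans ?_ (congrArg (psiMap M b u t) h1).symm)
  rw [psiMap_lof M b u t j]
  by_cases hh : b j ≤ s
  · have hh' : b j ≤ t := le_trans hh h
    rw [dif_pos hh, dif_pos hh']
    have hval : ((intervalRep T k (Set.Ici (b j)) (isConvex_Ici _)).map h x).1 = x.1 := by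
      rw [interval_map_val h x, if_pos (Set.mem_Ici.2 hh')]
    rw [hval, map_smul, ← LinearMap.comp_apply, ← M.map_comp hh h]
  · have hx : x.1 = 0 := interval_val_eq_zero (fun hs => hh (Set.mem_Ici.1 hs)) x
    rw [dif_neg hh, map_zero]
    by_cases hh' : b j ≤ t
    · rw [dif_pos hh']
      have hval : ((intervalRep T k (Set.Ici (b j)) (isConvex_Ici _)).map h x).1 = 0 := by
        rw [interval_map_val h x, hx]
        simp
      rw [hval, zero_smul]
    · rw [dif_neg hh']

/-- The coordinate description of `φ ∘ ψ`. -/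
noncomputable def sigComp {n m : ℕ} (b : Fin m → T) (v : Fin m → (Fin n → k)) (t : T)
    (j : Fin m) : (intervalRep T k (Set.Ici (b j)) (isConvex_Ici _)).V t →ₗ[k] (Fin n → k) :=
  (LinearMap.toSpanSingleton k (Fin n → k) (v j)).comp (Submodule.subtype _)

noncomputable def sigMap {n m : ℕ} (b : Fin m → T) (v : Fin m → (Fin n → k)) (t : T) :
    (rSum b k).V t →ₗ[k] (Fin n → k) :=
  DirectSum.toModule k (Fin m) (Fin n → k) (sigComp b v t)

set_option maxHeartbeats 1000000 in
lemma sigMap_lof {n m : ℕ} (b : Fin m → T) (v : Fin m → (Fin n → k)) (t : T)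
    [DecidableEq (Fin m)] (j : Fin m)
    (x : (intervalRep T k (Set.Ici (b j)) (isConvex_Ici _)).V t) :
    sigMap b v t (DirectSum.lof k (Fin m)
        (fun j' => (intervalRep T k (Set.Ici (b j')) (isConvex_Ici _)).V t) j x)
      = x.1 • v j := by
  show DirectSum.toModule k (Fin m) (Fin n → k) (sigComp b v t)
      (DirectSum.lof k (Fin m)
        (fun j' => (intervalRep T k (Set.Ici (b j')) (isConvex_Ici _)).V t) j x)
    = _
  rw [DirectSum.toModule_lof]
  rfl

lemma sigMap_eq_sum {n m : ℕ} (b : Fin m → T) (v : Fin m → (Fin n → k)) (t : T)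
    (z : (rSum b k).V t) :
    sigMap b v t z = ∑ j : Fin m,
      (DirectSum.component k (Fin m)
        (fun j' => (intervalRep T k (Set.Ici (b j')) (isConvex_Ici _)).V t) j z).1 • v j := by
  letI := Classical.decEq (Fin m)
  induction z using DirectSum.induction_on with
  | zero =>
    refine (map_zero (sigMap b v t)).trans ?_
    exact (Finset.sum_eq_zero fun j _ => zero_smul k (v j)).symm
  | of j x =>
    refine Eq.trans (sigMap_lof b v t j x) (Eq.symm ?_)
    refine Eq.trans (Finset.sum_eq_single j (fun j' _ hj' => ?_) (fun hj => absurd (Finset.mem_univ j) hj)) ?_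
    · have hc : DirectSum.component k (Fin m)
          (fun j'' => (intervalRep T k (Set.Ici (b j'')) (isConvex_Ici _)).V t) j'
          (DirectSum.lof k (Fin m)
            (fun j'' => (intervalRep T k (Set.Ici (b j'')) (isConvex_Ici _)).V t) j x)
          = 0 := by
        rw [DirectSum.component.of]
        exact dif_neg (Ne.symm hj')
      refine Eq.trans (congrArg (fun w => (Subtype.val w) • v j') hc) ?_
      exact zero_smul k (v j')
    · have hc : DirectSum.component k (Fin m)
          (fun j'' => (intervalRep T k (Set.Ici (b j'')) (isConvex_Ici _)).V t) j
          (DirectSum.lof k (Fin m)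
            (fun j'' => (intervalRep T k (Set.Ici (b j'')) (isConvex_Ici _)).V t) j x)
          = x := DirectSum.component.lof_self (R := k)
          (M := fun j'' => (intervalRep T k (Set.Ici (b j'')) (isConvex_Ici _)).V t) j x
      exact congrArg (fun w => (Subtype.val w) • v j) hc
  | add x y hx hy =>
    erw [map_add (sigMap b v t) x y]
    refine (congrArg₂ (· + ·) hx hy).trans ?_
    rw [← Finset.sum_add_distrib]
    refine Finset.sum_congr rfl fun j _ => ?_
    rw [map_add]
    exact (add_smul (DirectSum.component k (Fin m)
      (fun j' => (intervalRep T k (Set.Ici (b j')) (isConvex_Ici _)).V t) j x).1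
      (DirectSum.component k (Fin m)
      (fun j' => (intervalRep T k (Set.Ici (b j')) (isConvex_Ici _)).V t) j y).1 (v j)).symm

lemma sigMap_injective {n m : ℕ} (b : Fin m → T) (v : Fin m → (Fin n → k)) (t : T)
    (hLI : LinearIndependent k v) : Function.Injective (sigMap b v t) := by
  rw [← LinearMap.ker_eq_bot, LinearMap.ker_eq_bot']
  intro z hz
  rw [sigMap_eq_sum] at hz
  have h0 := Fintype.linearIndependent_iff.1 hLI _ hz
  refine DirectSum.ext fun j => ?_
  exact Subtype.ext (h0 j)

lemma sigMap_range {n m : ℕ} (b : Fin m → T) (v : Fin m → (Fin n → k)) (t : T) :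
    LinearMap.range (sigMap b v t) = Submodule.span k (v '' {j | b j ≤ t}) := by
  letI := Classical.decEq (Fin m)
  refine le_antisymm ?_ ?_
  · rintro _ ⟨z, rfl⟩
    rw [sigMap_eq_sum]
    refine Submodule.sum_mem _ fun j _ => ?_
    by_cases hj : b j ≤ t
    · exact Submodule.smul_mem _ _ (Submodule.subset_span ⟨j, hj, rfl⟩)
    · have h0 : (DirectSum.component k (Fin m)
          (fun j' => (intervalRep T k (Set.Ici (b j')) (isConvex_Ici _)).V t) j z).1 = 0 :=
        interval_val_eq_zero (fun ht => hj (Set.mem_Ici.1 ht)) _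
      rw [h0, zero_smul]
      exact Submodule.zero_mem _
  · rw [Submodule.span_le]
    rintro _ ⟨j, hj, rfl⟩
    have hj' : b j ≤ t := hj
    exact ⟨DirectSum.lof k (Fin m)
      (fun j' => (intervalRep T k (Set.Ici (b j')) (isConvex_Ici _)).V t) j
      ⟨1, by rw [if_pos (Set.mem_Ici.2 hj')]; trivial⟩,
      Eq.trans (sigMap_lof b v t j _) (one_smul k (v j))⟩

end Psi

section Assembly

variable {T : Type u} [LinearOrder T] {k : Type} [Field k]

lemma persIso_of_basis (M : PersMod T k) {n m : ℕ}
    (φ : ∀ t, M.V t →ₗ[k] (Fin n → k))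
    (hφinj : ∀ t, Function.Injective (φ t))
    (b : Fin m → T) (u : ∀ j, M.V (b j)) (v : Fin m → (Fin n → k))
    (hcomp : ∀ t, (φ t).comp (psiMap M b u t) = sigMap b v t)
    (hLI : LinearIndependent k v)
    (hrange : ∀ t, LinearMap.range (φ t) = Submodule.span k (v '' {j | b j ≤ t})) :
    Nonempty (PersIso M (rSum b k)) := by
  have hinj : ∀ t, Function.Injective (psiMap M b u t) := by
    intro t z z' hz
    refine sigMap_injective b v t hLI ?_
    rw [← hcomp t]
    simp only [LinearMap.comp_apply, hz]
  have hsurj : ∀ t, Function.Surjective (psiMap M b u t) := by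
    intro t y
    have hy : φ t y ∈ LinearMap.range (sigMap b v t) := by
      rw [sigMap_range, ← hrange]
      exact ⟨y, rfl⟩
    obtain ⟨z, hz⟩ := hy
    refine ⟨z, hφinj t ?_⟩
    rw [← LinearMap.comp_apply, hcomp t]
    exact hz
  let E : ∀ t, (rSum b k).V t ≃ₗ[k] M.V t := fun t =>
    LinearEquiv.ofBijective (psiMap M b u t) ⟨hinj t, hsurj t⟩
  have hE : ∀ t z, E t z = psiMap M b u t z := fun t z => rfl
  refine ⟨⟨fun t => (E t).symm, ?_⟩⟩
  intro s t h x
  apply (E t).injective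
  rw [LinearEquiv.apply_symm_apply]
  rw [hE t ((rSum b k).map h ((E s).symm x))]
  have hnat := LinearMap.congr_fun (psiMap_natural M b u h) ((E s).symm x)
  simp only [LinearMap.comp_apply] at hnat
  rw [← hnat, ← hE s, LinearEquiv.apply_symm_apply]

end Assembly

section Glue

variable {T : Type u} [LinearOrder T] {k : Type} [Field k]

lemma phi_comp_psi (M : PersMod T k) {n m : ℕ}
    (φ : ∀ t, M.V t →ₗ[k] (Fin n → k))
    (hφnat : ∀ (s t : T) (h : s ≤ t) (x : M.V s), φ t (M.map h x) = φ s x)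
    (b : Fin m → T) (u : ∀ j, M.V (b j)) (v : Fin m → (Fin n → k))
    (hv : ∀ j, φ (b j) (u j) = v j) (t : T) :
    (φ t).comp (psiMap M b u t) = sigMap b v t := by
  letI := Classical.decEq (Fin m)
  refine DirectSum.linearMap_ext _ fun j => ?_
  refine LinearMap.ext fun x => ?_
  simp only [LinearMap.comp_apply]
  refine Eq.trans (congrArg (φ t) (psiMap_lof M b u t j x))
    (Eq.trans ?_ (sigMap_lof b v t j x).symm)
  by_cases hh : b j ≤ t
  · rw [dif_pos hh, map_smul, hφnat (b j) t hh (u j), hv j]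
  · rw [dif_neg hh, map_zero]
    have hx : x.1 = 0 := interval_val_eq_zero (fun hs => hh (Set.mem_Ici.1 hs)) x
    rw [hx, zero_smul]

end Glue

/-- A finitely generated subrepresentation of a finite direct sum of representable
representations `⊕ k_{[aᵢ,∞)}` over a totally ordered set is isomorphic to a finite
direct sum of representations `k_{[c,∞)}` (in particular it is projective). -/
theorem fg_sub_of_proj_is_proj {T : Type u} [LinearOrder T] (k : Type) [Field k]
    (M : PersMod T k) (n : ℕ) (a : Fin n → T)
    -- M is a subrepresentation: it admits a pointwise injective morphism
    -- into the finite direct sum of representables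
    (hsub : ∃ f ∈ homSubmodule k M
        (dSum k (Fin n) (fun i => intervalRep T k (Set.Ici (a i)) (isConvex_Ici _))),
        ∀ t : T, Function.Injective (f t))
    -- M is finitely generated: it is a quotient of a finite direct sum
    -- of representables
    (hfg : ∃ (m : ℕ) (b : Fin m → T),
        ∃ g ∈ homSubmodule k
          (dSum k (Fin m) (fun j => intervalRep T k (Set.Ici (b j)) (isConvex_Ici _))) M,
        ∀ t : T, Function.Surjective (g t)) :
    ∃ (m : ℕ) (c : Fin m → T),
      Nonempty (PersIso M
        (dSum k (Fin m) (fun j => intervalRep T k (Set.Ici (c j)) (isConvex_Ici _)))) := by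
  obtain ⟨f, hf, finj⟩ := hsub
  obtain ⟨m, b0, g, hg, gsurj⟩ := hfg
  letI := Classical.decEq (Fin m)
  -- the pointwise injective coordinate map on M
  let φ : ∀ t, M.V t →ₗ[k] (Fin n → k) := fun t => (coordMap a t).comp (f t)
  have hφinj : ∀ t, Function.Injective (φ t) := fun t =>
    (coordMap_injective a t).comp (finj t)
  have hfprop : ∀ (s t : T) (h : s ≤ t) (x : M.V s),
      (dSum k (Fin n) (fun i => intervalRep T k (Set.Ici (a i)) (isConvex_Ici _))).map h
        (f s x) = f t (M.map h x) := hf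
  have hφnat : ∀ (s t : T) (h : s ≤ t) (x : M.V s), φ t (M.map h x) = φ s x := by
    intro s t h x
    show coordMap a t (f t (M.map h x)) = coordMap a s (f s x)
    rw [← hfprop s t h x]
    exact LinearMap.congr_fun (coordMap_natural a h) (f s x)
  -- the generators of M
  let oneEl : ∀ j : Fin m, (intervalRep T k (Set.Ici (b0 j)) (isConvex_Ici _)).V (b0 j) :=
    fun j => ⟨1, by rw [if_pos (Set.mem_Ici.2 (le_refl (b0 j)))]; trivial⟩
  let gen : ∀ j : Fin m, (rSum b0 k).V (b0 j) := fun j =>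
    DirectSum.lof k (Fin m)
      (fun j' => (intervalRep T k (Set.Ici (b0 j')) (isConvex_Ici _)).V (b0 j)) j (oneEl j)
  let u : ∀ j, M.V (b0 j) := fun j => g (b0 j) (gen j)
  let v : Fin m → (Fin n → k) := fun j => φ (b0 j) (u j)
  have hgprop : ∀ (s t : T) (h : s ≤ t)
      (x : (dSum k (Fin m) (fun i => intervalRep T k (Set.Ici (b0 i)) (isConvex_Ici _))).V s),
      M.map h (g s x)
        = g t ((dSum k (Fin m)
            (fun i => intervalRep T k (Set.Ici (b0 i)) (isConvex_Ici _))).map h x) := hg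
  -- the range of φ is spanned by the images of the generators
  have hrange : ∀ t, LinearMap.range (φ t) = Submodule.span k (v '' {j | b0 j ≤ t}) := by
    intro t
    refine le_antisymm ?_ ?_
    · rintro _ ⟨y, rfl⟩
      obtain ⟨q, rfl⟩ := gsurj t y
      induction q using DirectSum.induction_on with
      | zero =>
        erw [map_zero (g t), map_zero]
        exact Submodule.zero_mem _
      | of j x =>
        by_cases hbj : b0 j ≤ t
        · have h5 : DirectSum.lof k (Fin m)
              (fun j' => (intervalRep T k (Set.Ici (b0 j')) (isConvex_Ici _)).V t) j
              ((intervalRep T k (Set.Ici (b0 j)) (isConvex_Ici _)).map hbj (oneEl j))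
              = (dSum k (Fin m)
                  (fun i => intervalRep T k (Set.Ici (b0 i)) (isConvex_Ici _))).map hbj
                  (gen j) :=
            (DirectSum.toModule_lof (R := k)
              (φ := fun i => (DirectSum.lof k (Fin m)
                  (fun j' => (intervalRep T k (Set.Ici (b0 j')) (isConvex_Ici _)).V t) i).comp
                ((intervalRep T k (Set.Ici (b0 i)) (isConvex_Ici _)).map hbj))
              j (oneEl j)).symm
          have hxval : x = x.1 • (intervalRep T k (Set.Ici (b0 j)) (isConvex_Ici _)).map hbj
              (oneEl j) := by
            refine Eq.trans (interval_eq_smul_one (Set.mem_Ici.2 hbj) x)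
              (congrArg (fun w => x.1 • w) (Subtype.ext ?_))
            show (1 : k) = ((intervalRep T k (Set.Ici (b0 j)) (isConvex_Ici _)).map hbj
              (oneEl j)).1
            rw [interval_map_val hbj (oneEl j), if_pos (Set.mem_Ici.2 hbj)]
          have h6 : DirectSum.lof k (Fin m)
              (fun j' => (intervalRep T k (Set.Ici (b0 j')) (isConvex_Ici _)).V t) j x
              = x.1 • (dSum k (Fin m)
                  (fun i => intervalRep T k (Set.Ici (b0 i)) (isConvex_Ici _))).map hbj
                  (gen j) := by
            refine Eq.trans (congrArg (DirectSum.lof k (Fin m)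
              (fun j' => (intervalRep T k (Set.Ici (b0 j')) (isConvex_Ici _)).V t) j) hxval) ?_
            refine Eq.trans (map_smul (DirectSum.lof k (Fin m)
              (fun j' => (intervalRep T k (Set.Ici (b0 j')) (isConvex_Ici _)).V t) j) x.1 _) ?_
            exact congrArg (fun w => x.1 • w) h5
          have key : φ t (g t (DirectSum.lof k (Fin m)
              (fun j' => (intervalRep T k (Set.Ici (b0 j')) (isConvex_Ici _)).V t) j x))
              = x.1 • v j := by
            rw [h6, map_smul, map_smul, ← hgprop (b0 j) t hbj (gen j),
              hφnat (b0 j) t hbj (g (b0 j) (gen j))]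
          have hmem : x.1 • v j ∈ Submodule.span k (v '' {j' | b0 j' ≤ t}) :=
            Submodule.smul_mem _ _ (Submodule.subset_span ⟨j, hbj, rfl⟩)
          exact (congrArg (fun w => w ∈ Submodule.span k (v '' {j' | b0 j' ≤ t})) key).mpr hmem
        · have hx0 : x = 0 :=
            Subtype.ext (interval_val_eq_zero (fun ht' => hbj (Set.mem_Ici.1 ht')) x)
          rw [hx0, map_zero]
          erw [map_zero (g t), map_zero]
          exact Submodule.zero_mem _
      | add q1 q2 hq1 hq2 =>
        erw [map_add (g t) q1 q2, map_add]
        exact Submodule.add_mem _ hq1 hq2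
    · rw [Submodule.span_le]
      rintro _ ⟨j, hj, rfl⟩
      exact ⟨M.map hj (u j), hφnat (b0 j) t hj (u j)⟩
  -- sort the generators so that the grading points are monotone
  let σ := Tuple.sort b0
  let b1 : Fin m → T := fun j => b0 (σ j)
  let v1 : Fin m → (Fin n → k) := fun j => v (σ j)
  let u1 : ∀ j, M.V (b1 j) := fun j => u (σ j)
  have hmono : Monotone b1 := Tuple.monotone_sort b0
  have him : ∀ t, v1 '' {j | b1 j ≤ t} = v '' {j | b0 j ≤ t} := by
    intro t
    ext w
    constructor
    · rintro ⟨j, hj, rfl⟩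
      exact ⟨σ j, hj, rfl⟩
    · rintro ⟨j, hj, rfl⟩
      refine ⟨σ.symm j, ?_, ?_⟩
      · show b0 (σ (σ.symm j)) ≤ t
        rw [Equiv.apply_symm_apply]
        exact hj
      · show v (σ (σ.symm j)) = v j
        rw [Equiv.apply_symm_apply]
  have hrange1 : ∀ t, LinearMap.range (φ t) = Submodule.span k (v1 '' {j | b1 j ≤ t}) := by
    intro t; rw [hrange t, him t]
  -- select a linearly independent generating subfamily
  obtain ⟨S, hSLI, hSspan⟩ := exists_good_subset (k := k) v1
  let e := S.orderIsoOfFin rfl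
  let c : Fin S.card → T := fun j => b1 (e j)
  let v2 : Fin S.card → (Fin n → k) := fun j => v1 (e j)
  let u2 : ∀ j, M.V (c j) := fun j => u1 (e j)
  have hLI2 : LinearIndependent k v2 :=
    hSLI.comp (fun j => e j) (fun j j' hjj => e.toEquiv.injective hjj)
  have hrange2 : ∀ t, LinearMap.range (φ t) = Submodule.span k (v2 '' {j | c j ≤ t}) := by
    intro t
    rw [hrange1 t, hSspan {j | b1 j ≤ t} (fun j' j hle hj => le_trans (hmono hle) hj)]
    have hseteq : v1 '' ({j | b1 j ≤ t} ∩ ↑S) = v2 '' {j | c j ≤ t} := by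
      ext w
      constructor
      · rintro ⟨j, ⟨hjt, hjS⟩, rfl⟩
        refine ⟨e.symm ⟨j, hjS⟩, ?_, ?_⟩
        · show b1 ((e (e.symm ⟨j, hjS⟩)) : Fin m) ≤ t
          rw [OrderIso.apply_symm_apply]
          exact hjt
        · show v1 ((e (e.symm ⟨j, hjS⟩)) : Fin m) = v1 j
          rw [OrderIso.apply_symm_apply]
      · rintro ⟨j, hj, rfl⟩
        exact ⟨(e j : Fin m), ⟨hj, (e j).2⟩, rfl⟩
    rw [hseteq]
  have hv2 : ∀ j, φ (c j) (u2 j) = v2 j := fun j => rfl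
  obtain ⟨iso⟩ := persIso_of_basis M φ hφinj c u2 v2
    (fun t => phi_comp_psi M φ hφnat c u2 v2 hv2 t) hLI2 hrange2
  exact ⟨S.card, c, ⟨iso⟩⟩
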